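/- Fix ν. Suppose D is nonempty, (X × Y) ∩ dom f^ν is nonempty, and for all x ∈ X one has inf_{z∈Y^ν} [ g^ν(x,z) + λ̄^ν · dist(H^ν(x,z), D) ] > −∞. If σ^ν > 0, θ^ν > 0, the functions f^ν and g^ν are lower semicontinuous, H^ν is continuous relative to X×Y, g^ν(·,z) is continuous relative to X for each z ∈ Y^ν, the sets X, Y, D are closed, and the set { (x,y) ∈ X × Y | f^ν(x,y) ≤ γ } is bounded for each γ ∈ ℝ, then there exists an optimal solution of (P)^ν. -/

import Mathlib

open Filter Topology Metric Set

attribute [local instance] Classical.propDecidable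

noncomputable section

/-- `ℝ^n` with the Euclidean norm. -/
abbrev Rn (n : ℕ) : Type := EuclideanSpace ℝ (Fin n)

variable {n m : ℕ} {Q : Type*} [NormedAddCommGroup Q]

/-- `(x, y)` is feasible in the bilevel problem (P): `x ∈ X` and
`y ∈ τ-argmin_{z ∈ Y} { g(x,z) | H(x,z) ∈ D }`. -/
def PFeas (X : Set (Rn n)) (Y : Set (Rn m)) (D : Set Q)
    (g : Rn n × Rn m → ℝ) (H : Rn n × Rn m → Q) (τ : ℝ)
    (x : Rn n) (y : Rn m) : Prop :=
  x ∈ X ∧ y ∈ Y ∧ H (x, y) ∈ D ∧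
    ∀ z ∈ Y, H (x, z) ∈ D → g (x, y) ≤ g (x, z) + τ

/-- The minimum value `𝔪` of (P). -/
def PVal (X : Set (Rn n)) (Y : Set (Rn m)) (D : Set Q)
    (f : Rn n × Rn m → EReal) (g : Rn n × Rn m → ℝ) (H : Rn n × Rn m → Q)
    (τ : ℝ) : EReal :=
  ⨅ (x : Rn n) (y : Rn m) (_ : PFeas X Y D g H τ x y), f (x, y)

/-- Optimal solution of (P): feasible, finite objective value attaining `𝔪`. -/
def POpt (X : Set (Rn n)) (Y : Set (Rn m)) (D : Set Q)
    (f : Rn n × Rn m → EReal) (g : Rn n × Rn m → ℝ) (H : Rn n × Rn m → Q)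
    (τ : ℝ) (x : Rn n) (y : Rn m) : Prop :=
  PFeas X Y D g H τ x y ∧ f (x, y) ≠ ⊤ ∧ f (x, y) = PVal X Y D f g H τ

/-- Feasibility in the alternative problem (P)^ν with data `Yn, gn, Hn, lamBar, τn`. -/
def PnuFeas (X : Set (Rn n)) (Y : Set (Rn m)) (D : Set Q) (Yn : Set (Rn m))
    (gn : Rn n × Rn m → ℝ) (Hn : Rn n × Rn m → Q) (lamBar τn : ℝ)
    (x : Rn n) (y : Rn m) (u : Q) (α lam : ℝ) : Prop :=
  x ∈ X ∧ y ∈ Y ∧ α ≤ 0 ∧ 0 ≤ lam ∧ lam ≤ lamBar ∧ Hn (x, y) + u ∈ D ∧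
    ∀ z ∈ Yn, gn (x, y) + α ≤ gn (x, z) + lam * infDist (Hn (x, z)) D + τn

/-- Objective function of (P)^ν: `f^ν(x,y) + σ^ν ‖u‖ - θ^ν α`. -/
def PnuObj (fn : Rn n × Rn m → EReal) (σn θn : ℝ)
    (x : Rn n) (y : Rn m) (u : Q) (α : ℝ) : EReal :=
  fn (x, y) + ((σn * ‖u‖ - θn * α : ℝ) : EReal)

/-- The minimum value `𝔪^ν` of (P)^ν. -/
def PnuVal (X : Set (Rn n)) (Y : Set (Rn m)) (D : Set Q) (Yn : Set (Rn m))
    (fn : Rn n × Rn m → EReal) (gn : Rn n × Rn m → ℝ) (Hn : Rn n × Rn m → Q)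
    (σn θn lamBar τn : ℝ) : EReal :=
  ⨅ (x : Rn n) (y : Rn m) (u : Q) (α : ℝ) (lam : ℝ)
    (_ : PnuFeas X Y D Yn gn Hn lamBar τn x y u α lam),
    PnuObj fn σn θn x y u α

/-- `ε`-optimal solution of (P)^ν: feasible with finite objective value at most `𝔪^ν + ε`. -/
def PnuEps (X : Set (Rn n)) (Y : Set (Rn m)) (D : Set Q) (Yn : Set (Rn m))
    (fn : Rn n × Rn m → EReal) (gn : Rn n × Rn m → ℝ) (Hn : Rn n × Rn m → Q)
    (σn θn lamBar τn ε : ℝ)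
    (x : Rn n) (y : Rn m) (u : Q) (α lam : ℝ) : Prop :=
  PnuFeas X Y D Yn gn Hn lamBar τn x y u α lam ∧
    PnuObj fn σn θn x y u α ≠ ⊤ ∧
    PnuObj fn σn θn x y u α ≤ PnuVal X Y D Yn fn gn Hn σn θn lamBar τn + (ε : EReal)

/-- The value function `V(x,u) = inf_{y ∈ Y} { g(x,y) | H(x,y) + u ∈ D }`. -/
def Vfun (Y : Set (Rn m)) (D : Set Q)
    (g : Rn n × Rn m → ℝ) (H : Rn n × Rn m → Q)
    (x : Rn n) (u : Q) : EReal :=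
  ⨅ (y : Rn m) (_ : y ∈ Y ∧ H (x, y) + u ∈ D), (g (x, y) : EReal)

/-- The value function `V` is calm at `x` with penalty threshold `lam`. -/
def CalmAtWith (Y : Set (Rn m)) (D : Set Q)
    (g : Rn n × Rn m → ℝ) (H : Rn n × Rn m → Q)
    (x : Rn n) (lam : ℝ) : Prop :=
  0 ≤ lam ∧ ∀ u : Q,
    Vfun Y D g H x 0 - ((lam * ‖u‖ : ℝ) : EReal) ≤ Vfun Y D g H x u

/-- The value function `V` is calm at `x`. -/
def CalmAt (Y : Set (Rn m)) (D : Set Q)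
    (g : Rn n × Rn m → ℝ) (H : Rn n × Rn m → Q) (x : Rn n) : Prop :=
  ∃ lam : ℝ, CalmAtWith Y D g H x lam

/-- The value function `V` is locally calm at `xbar`. -/
def LocallyCalmAt (Y : Set (Rn m)) (D : Set Q)
    (g : Rn n × Rn m → ℝ) (H : Rn n × Rn m → Q) (xbar : Rn n) : Prop :=
  ∃ lam ρ : ℝ, 0 ≤ lam ∧ 0 < ρ ∧
    ∀ x ∈ Metric.closedBall xbar ρ, ∀ u : Q,
      Vfun Y D g H x 0 - ((lam * ‖u‖ : ℝ) : EReal) ≤ Vfun Y D g H x u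

/-- The penalty-based value function `μ(x,λ) = inf_{y ∈ S} [g(x,y) + λ dist(H(x,y), D)]`. -/
def muSet (S : Set (Rn m)) (D : Set Q)
    (g : Rn n × Rn m → ℝ) (H : Rn n × Rn m → Q)
    (x : Rn n) (lam : ℝ) : EReal :=
  ⨅ (y : Rn m) (_ : y ∈ S), ((g (x, y) + lam * infDist (H (x, y)) D : ℝ) : EReal)

/-- The Basic Assumption (Assumption 2.1). -/
structure BasicAssumption (X : Set (Rn n)) (Y : Set (Rn m)) (D : Set Q)
    (Yν : ℕ → Set (Rn m))
    (f : Rn n × Rn m → EReal) (fν : ℕ → Rn n × Rn m → EReal)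
    (g : Rn n × Rn m → ℝ) (gν : ℕ → Rn n × Rn m → ℝ)
    (H : Rn n × Rn m → Q) (Hν : ℕ → Rn n × Rn m → Q)
    (σ θ lamBar τν δ η : ℕ → ℝ) : Prop where
  X_nonempty : X.Nonempty
  X_closed : IsClosed X
  Y_nonempty : Y.Nonempty
  Y_closed : IsClosed Y
  D_nonempty : D.Nonempty
  D_closed : IsClosed D
  Yν_nonempty : ∀ ν, (Yν ν).Nonempty
  Yν_subset : ∀ ν, Yν ν ⊆ Y
  Yν_conv : ∀ y : Rn m,
    Tendsto (fun ν => infDist y (Yν ν)) atTop (𝓝 (infDist y Y))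
  δ_lim : Tendsto δ atTop (𝓝 0)
  g_err : ∀ ν, ∀ x ∈ X, ∀ y ∈ Y, |gν ν (x, y) - g (x, y)| ≤ δ ν
  g_cont : ContinuousOn g (X ×ˢ Y)
  η_lim : Tendsto η atTop (𝓝 0)
  H_err : ∀ ν, ∀ x ∈ X, ∀ y ∈ Y,
    |infDist (Hν ν (x, y)) D - infDist (H (x, y)) D| ≤ η ν
  H_cont : ContinuousOn H (X ×ˢ Y)
  f_ne_bot : ∀ p, f p ≠ ⊥
  fν_ne_bot : ∀ ν p, fν ν p ≠ ⊥
  f_limsup : ∀ x ∈ X, ∀ y ∈ Y,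
    limsup (fun ν => fν ν (x, y)) atTop ≤ f (x, y)
  f_liminf : ∀ x ∈ X, ∀ y ∈ Y, ∀ (xs : ℕ → Rn n) (ys : ℕ → Rn m),
    (∀ ν, xs ν ∈ X) → (∀ ν, ys ν ∈ Y) →
    Tendsto xs atTop (𝓝 x) → Tendsto ys atTop (𝓝 y) →
    f (x, y) ≤ liminf (fun ν => fν ν (xs ν, ys ν)) atTop
  σ_nonneg : ∀ ν, 0 ≤ σ ν
  θ_nonneg : ∀ ν, 0 ≤ θ ν
  lamBar_nonneg : ∀ ν, 0 ≤ lamBar ν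
  τν_nonneg : ∀ ν, 0 ≤ τν ν
  lamBar_top : Tendsto lamBar atTop atTop
  ση_lim : Tendsto (fun ν => σ ν * η ν) atTop (𝓝 0)
  θlamη_lim : Tendsto (fun ν => θ ν * lamBar ν * η ν) atTop (𝓝 0)
  θδ_lim : Tendsto (fun ν => θ ν * δ ν) atTop (𝓝 0)


private lemma level_compact {X : Set (Rn n)} {Y : Set (Rn m)} {fn : Rn n × Rn m → EReal}
    (hflsc : LowerSemicontinuous fn) (hXc : IsClosed X) (hYc : IsClosed Y)
    (hlevel : ∀ γ : ℝ, Bornology.IsBounded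
      {p : Rn n × Rn m | p.1 ∈ X ∧ p.2 ∈ Y ∧ fn p ≤ (γ : EReal)}) (γ : ℝ) :
    IsCompact {p : Rn n × Rn m | p.1 ∈ X ∧ p.2 ∈ Y ∧ fn p ≤ (γ : EReal)} := by
  have hcl : IsClosed {p : Rn n × Rn m | p.1 ∈ X ∧ p.2 ∈ Y ∧ fn p ≤ (γ : EReal)} := by
    have h1 : {p : Rn n × Rn m | p.1 ∈ X ∧ p.2 ∈ Y ∧ fn p ≤ (γ : EReal)}
        = (X ×ˢ Y) ∩ fn ⁻¹' Set.Iic (γ : EReal) := by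
      ext p; simp [Set.mem_prod, and_assoc]
    rw [h1]
    exact (hXc.prod hYc).inter (hflsc.isClosed_preimage _)
  exact isCompact_iff_isClosed_bounded.mpr ⟨hcl, hlevel γ⟩

private lemma exists_lb {X : Set (Rn n)} {Y : Set (Rn m)} {fn : Rn n × Rn m → EReal}
    (hflsc : LowerSemicontinuous fn) (hfn_bot : ∀ p, fn p ≠ ⊥)
    (hXc : IsClosed X) (hYc : IsClosed Y)
    (hlevel : ∀ γ : ℝ, Bornology.IsBounded
      {p : Rn n × Rn m | p.1 ∈ X ∧ p.2 ∈ Y ∧ fn p ≤ (γ : EReal)}) :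
    ∃ c : ℝ, ∀ p : Rn n × Rn m, p.1 ∈ X → p.2 ∈ Y → (c : EReal) ≤ fn p := by
  by_contra hcon
  push_neg at hcon
  choose p hp using fun k : ℕ => hcon (-(k : ℝ))
  have hpA : ∀ k : ℕ, p k ∈ {q : Rn n × Rn m | q.1 ∈ X ∧ q.2 ∈ Y ∧ fn q ≤ ((0 : ℝ) : EReal)} := by
    intro k
    refine ⟨(hp k).1, (hp k).2.1, le_trans (hp k).2.2.le ?_⟩
    exact_mod_cast EReal.coe_le_coe_iff.mpr (neg_nonpos.mpr (Nat.cast_nonneg k))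
  obtain ⟨a, haA, φ, hφ, hconv⟩ :=
    (level_compact hflsc hXc hYc hlevel 0).tendsto_subseq hpA
  obtain ⟨b, -, hb2⟩ := EReal.exists_between_coe_real
    (bot_lt_iff_ne_bot.mpr (hfn_bot a))
  have hev : ∀ᶠ k in atTop, (b : EReal) < fn (p (φ k)) :=
    hconv.eventually (hflsc a b hb2)
  have hev2 : ∀ᶠ k : ℕ in atTop, -b < (k : ℝ) :=
    tendsto_natCast_atTop_atTop.eventually_gt_atTop (-b)
  obtain ⟨k, hk1, hk2⟩ := (hev.and hev2).exists
  have h3 : (b : EReal) < ((-(φ k : ℝ) : ℝ) : EReal) := hk1.trans (hp (φ k)).2.2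
  rw [EReal.coe_lt_coe_iff] at h3
  have h4 : (k : ℝ) ≤ (φ k : ℝ) := by exact_mod_cast hφ.le_apply
  linarith

/-- Proposition 4.1(b): existence of an optimal solution of (P)^ν under
lower semicontinuity, continuity and level-boundedness conditions. -/
theorem Pnu_optimal_solution_exists
    [NormedSpace ℝ Q] [FiniteDimensional ℝ Q]
    (X : Set (Rn n)) (Y : Set (Rn m)) (D : Set Q) (Yn : Set (Rn m))
    (fn : Rn n × Rn m → EReal) (gn : Rn n × Rn m → ℝ) (Hn : Rn n × Rn m → Q)
    (σn θn lamBar τn : ℝ)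
    (hlamBar : 0 ≤ lamBar) (hτn : 0 ≤ τn)
    (hfn_bot : ∀ p, fn p ≠ ⊥)
    (hYnne : Yn.Nonempty) (hYnY : Yn ⊆ Y)
    (hD : D.Nonempty)
    (hdom : ∃ x ∈ X, ∃ y ∈ Y, fn (x, y) ≠ ⊤)
    (hbdd : ∀ x ∈ X, muSet Yn D gn Hn x lamBar ≠ ⊥)
    (hσ : 0 < σn) (hθ : 0 < θn)
    (hflsc : LowerSemicontinuous fn) (hglsc : LowerSemicontinuous gn)
    (hHcont : ContinuousOn Hn (X ×ˢ Y))
    (hgxcont : ∀ z ∈ Yn, ContinuousOn (fun x : Rn n => gn (x, z)) X)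
    (hXc : IsClosed X) (hYc : IsClosed Y) (hDc : IsClosed D)
    (hlevel : ∀ γ : ℝ, Bornology.IsBounded
      {p : Rn n × Rn m | p.1 ∈ X ∧ p.2 ∈ Y ∧ fn p ≤ (γ : EReal)}) :
    ∃ (x : Rn n) (y : Rn m) (u : Q) (α lam : ℝ),
      PnuFeas X Y D Yn gn Hn lamBar τn x y u α lam ∧
      PnuObj fn σn θn x y u α ≠ ⊤ ∧
      PnuObj fn σn θn x y u α = PnuVal X Y D Yn fn gn Hn σn θn lamBar τn := by
  classical
  obtain ⟨c, hc⟩ := exists_lb hflsc hfn_bot hXc hYc hlevel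
  have hval_le : ∀ x y u (α lam : ℝ), PnuFeas X Y D Yn gn Hn lamBar τn x y u α lam →
      PnuVal X Y D Yn fn gn Hn σn θn lamBar τn ≤ PnuObj fn σn θn x y u α := by
    intro x y u α lam h
    exact iInf_le_of_le x (iInf_le_of_le y (iInf_le_of_le u (iInf_le_of_le α
      (iInf_le_of_le lam (iInf_le _ h)))))
  have hextra : ∀ (u : Q) (α : ℝ), α ≤ 0 → 0 ≤ σn * ‖u‖ - θn * α := by
    intro u α hα
    have h1 : 0 ≤ σn * ‖u‖ := mul_nonneg hσ.le (norm_nonneg u)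
    have h2 : θn * α ≤ 0 := mul_nonpos_of_nonneg_of_nonpos hθ.le hα
    linarith
  have hval_ge : (c : EReal) ≤ PnuVal X Y D Yn fn gn Hn σn θn lamBar τn := by
    refine le_iInf fun x => le_iInf fun y => le_iInf fun u => le_iInf fun α =>
      le_iInf fun lam => le_iInf fun h => ?_
    have he : ((0 : ℝ) : EReal) ≤ ((σn * ‖u‖ - θn * α : ℝ) : EReal) :=
      EReal.coe_le_coe_iff.mpr (hextra u α h.2.2.1)
    calc (c : EReal) = (c : EReal) + ((0 : ℝ) : EReal) := by simp
      _ ≤ fn (x, y) + ((σn * ‖u‖ - θn * α : ℝ) : EReal) :=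
        add_le_add (hc (x, y) h.1 h.2.1) he
  -- a feasible point with finite objective value
  obtain ⟨x₀, hx₀, y₀, hy₀, hfx₀⟩ := hdom
  obtain ⟨d₀, hd₀⟩ := hD
  have hμ := hbdd x₀ hx₀
  obtain ⟨z₁, hz₁⟩ := hYnne
  have hμ_le : muSet Yn D gn Hn x₀ lamBar ≤
      ((gn (x₀, z₁) + lamBar * infDist (Hn (x₀, z₁)) D : ℝ) : EReal) :=
    iInf_le_of_le z₁ (iInf_le _ hz₁)
  have hμ_netop : muSet Yn D gn Hn x₀ lamBar ≠ ⊤ :=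
    (hμ_le.trans_lt (EReal.coe_lt_top _)).ne
  set M : ℝ := (muSet Yn D gn Hn x₀ lamBar).toReal with hM
  have hMeq : (M : EReal) = muSet Yn D gn Hn x₀ lamBar := EReal.coe_toReal hμ_netop hμ
  clear_value M
  have hMle : ∀ z ∈ Yn, M ≤ gn (x₀, z) + lamBar * infDist (Hn (x₀, z)) D := by
    intro z hz
    have h1 : (M : EReal) ≤ ((gn (x₀, z) + lamBar * infDist (Hn (x₀, z)) D : ℝ) : EReal) :=
      hMeq.le.trans (iInf_le_of_le z (iInf_le _ hz))
    exact EReal.coe_le_coe_iff.mp h1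
  set α₀ : ℝ := min 0 (M + τn - gn (x₀, y₀)) with hα₀
  set u₀ : Q := d₀ - Hn (x₀, y₀) with hu₀
  have hfeas₀ : PnuFeas X Y D Yn gn Hn lamBar τn x₀ y₀ u₀ α₀ lamBar := by
    refine ⟨hx₀, hy₀, min_le_left _ _, hlamBar, le_refl _, by simp [hu₀, hd₀], ?_⟩
    intro z hz
    have h1 : α₀ ≤ M + τn - gn (x₀, y₀) := min_le_right _ _
    have h2 := hMle z hz
    linarith
  clear_value α₀ u₀
  have hobj₀_netop : PnuObj fn σn θn x₀ y₀ u₀ α₀ ≠ ⊤ :=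
    (EReal.add_lt_top hfx₀ (EReal.coe_ne_top _)).ne
  set 𝔪 : EReal := PnuVal X Y D Yn fn gn Hn σn θn lamBar τn with h𝔪def
  clear_value 𝔪
  have h𝔪top : 𝔪 ≠ ⊤ :=
    ((hval_le x₀ y₀ u₀ α₀ lamBar hfeas₀).trans_lt
      (lt_top_iff_ne_top.mpr hobj₀_netop)).ne
  have h𝔪bot : 𝔪 ≠ ⊥ := by
    intro h
    rw [h, le_bot_iff] at hval_ge
    exact EReal.coe_ne_bot c hval_ge
  set r : ℝ := 𝔪.toReal with hrdef
  have hr : (r : EReal) = 𝔪 := EReal.coe_toReal h𝔪top h𝔪bot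
  clear_value r
  -- minimizing sequence
  have hseq : ∀ k : ℕ, ∃ x y u, ∃ (α lam : ℝ),
      PnuFeas X Y D Yn gn Hn lamBar τn x y u α lam ∧
      PnuObj fn σn θn x y u α < ((r + 1 / ((k : ℝ) + 1) : ℝ) : EReal) := by
    intro k
    by_contra hcon
    push_neg at hcon
    have hge : ((r + 1 / ((k : ℝ) + 1) : ℝ) : EReal) ≤
        PnuVal X Y D Yn fn gn Hn σn θn lamBar τn :=
      le_iInf fun x => le_iInf fun y => le_iInf fun u => le_iInf fun α =>
        le_iInf fun lam => le_iInf fun h => hcon x y u α lam h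
    rw [← h𝔪def] at hge
    rw [← hr, EReal.coe_le_coe_iff] at hge
    have hpos : 0 < 1 / ((k : ℝ) + 1) := by positivity
    linarith
  choose xs ys us αs lams hfeas hobj using hseq
  set e : ℕ → ℝ := fun k => σn * ‖us k‖ - θn * αs k with he_def
  have he0 : ∀ k, 0 ≤ e k := fun k => hextra (us k) (αs k) (hfeas k).2.2.1
  have hobj' : ∀ k, fn (xs k, ys k) + ((e k : ℝ) : EReal)
      < ((r + 1 / ((k : ℝ) + 1) : ℝ) : EReal) := by
    intro k
    simpa [PnuObj, he_def] using hobj k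
  clear_value e
  have hone : ∀ k : ℕ, 1 / ((k : ℝ) + 1) ≤ 1 := by
    intro k
    rw [div_le_one (by positivity)]
    linarith [Nat.cast_nonneg (α := ℝ) k]
  have hfn_le : ∀ k, fn (xs k, ys k) ≤ ((r + 1 : ℝ) : EReal) := by
    intro k
    calc fn (xs k, ys k) = fn (xs k, ys k) + ((0 : ℝ) : EReal) := by simp
      _ ≤ fn (xs k, ys k) + ((e k : ℝ) : EReal) :=
          add_le_add le_rfl (EReal.coe_le_coe_iff.mpr (he0 k))
      _ ≤ ((r + 1 / ((k : ℝ) + 1) : ℝ) : EReal) := (hobj' k).le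
      _ ≤ ((r + 1 : ℝ) : EReal) := EReal.coe_le_coe_iff.mpr (by linarith [hone k])
  have hmemS : ∀ k, (xs k, ys k) ∈
      {p : Rn n × Rn m | p.1 ∈ X ∧ p.2 ∈ Y ∧ fn p ≤ ((r + 1 : ℝ) : EReal)} :=
    fun k => ⟨(hfeas k).1, (hfeas k).2.1, hfn_le k⟩
  have hfn_netop : ∀ k, fn (xs k, ys k) ≠ ⊤ :=
    fun k => ((hfn_le k).trans_lt (EReal.coe_lt_top _)).ne
  set a : ℕ → ℝ := fun k => (fn (xs k, ys k)).toReal with ha_def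
  have ha : ∀ k, ((a k : ℝ) : EReal) = fn (xs k, ys k) :=
    fun k => EReal.coe_toReal (hfn_netop k) (hfn_bot _)
  clear_value a
  have hreal : ∀ k, a k + e k < r + 1 / ((k : ℝ) + 1) := by
    intro k
    have h1 := hobj' k
    rw [← ha k, ← EReal.coe_add, EReal.coe_lt_coe_iff] at h1
    exact h1
  have hreal_ge : ∀ k, r ≤ a k + e k := by
    intro k
    have h1 : (r : EReal) ≤ PnuObj fn σn θn (xs k) (ys k) (us k) (αs k) :=
      hr.le.trans (hval_le _ _ _ _ _ (hfeas k))
    have h2 : PnuObj fn σn θn (xs k) (ys k) (us k) (αs k)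
        = fn (xs k, ys k) + ((e k : ℝ) : EReal) := by simp [PnuObj, he_def]
    rw [h2, ← ha k, ← EReal.coe_add, EReal.coe_le_coe_iff] at h1
    exact h1
  have hcak : ∀ k, c ≤ a k := by
    intro k
    have h1 := hc (xs k, ys k) (hfeas k).1 (hfeas k).2.1
    rw [← ha k, EReal.coe_le_coe_iff] at h1
    exact h1
  have he_ub : ∀ k, e k ≤ r + 1 - c := by
    intro k
    have h1 := hreal k
    have h2 := hcak k
    have h3 := hone k
    linarith
  set B₁ : ℝ := (r + 1 - c) / σn with hB₁
  set B₂ : ℝ := (r + 1 - c) / θn with hB₂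
  clear_value B₁ B₂
  have hu_ub : ∀ k, ‖us k‖ ≤ B₁ := by
    intro k
    have h2 : θn * αs k ≤ 0 := mul_nonpos_of_nonneg_of_nonpos hθ.le (hfeas k).2.2.1
    have h3 : σn * ‖us k‖ - θn * αs k ≤ r + 1 - c := by
      have := he_ub k; rw [he_def] at this; exact this
    rw [hB₁, le_div_iff₀ hσ]
    linarith [(by ring : ‖us k‖ * σn = σn * ‖us k‖)]
  have hα_lb : ∀ k, -B₂ ≤ αs k := by
    intro k
    have h1 : 0 ≤ σn * ‖us k‖ := mul_nonneg hσ.le (norm_nonneg _)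
    have h3 : σn * ‖us k‖ - θn * αs k ≤ r + 1 - c := by
      have := he_ub k; rw [he_def] at this; exact this
    have h4 : -αs k ≤ B₂ := by
      rw [hB₂, le_div_iff₀ hθ]
      linarith [(by ring : -αs k * θn = -(θn * αs k))]
    linarith
  -- compactness and subsequence
  have hScomp : IsCompact
      {p : Rn n × Rn m | p.1 ∈ X ∧ p.2 ∈ Y ∧ fn p ≤ ((r + 1 : ℝ) : EReal)} :=
    level_compact hflsc hXc hYc hlevel (r + 1)
  have hK : IsCompact
      ({p : Rn n × Rn m | p.1 ∈ X ∧ p.2 ∈ Y ∧ fn p ≤ ((r + 1 : ℝ) : EReal)} ×ˢ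
        ((Metric.closedBall (0 : Q) B₁) ×ˢ ((Set.Icc (-B₂) 0) ×ˢ (Set.Icc 0 lamBar)))) :=
    hScomp.prod ((isCompact_closedBall _ _).prod (isCompact_Icc.prod isCompact_Icc))
  have hmemK : ∀ k, (fun k => ((xs k, ys k), us k, αs k, lams k)) k ∈
      ({p : Rn n × Rn m | p.1 ∈ X ∧ p.2 ∈ Y ∧ fn p ≤ ((r + 1 : ℝ) : EReal)} ×ˢ
        ((Metric.closedBall (0 : Q) B₁) ×ˢ ((Set.Icc (-B₂) 0) ×ˢ (Set.Icc 0 lamBar)))) := by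
    intro k
    refine ⟨hmemS k, ?_, ⟨hα_lb k, (hfeas k).2.2.1⟩, ⟨(hfeas k).2.2.2.1, (hfeas k).2.2.2.2.1⟩⟩
    rw [mem_closedBall_zero_iff]
    exact hu_ub k
  obtain ⟨L, hLK, φ, hφ, hconv⟩ := hK.tendsto_subseq hmemK
  have hx : Tendsto (fun k => xs (φ k)) atTop (𝓝 L.1.1) := by
    exact ((continuous_fst.comp continuous_fst).tendsto L).comp hconv
  have hy : Tendsto (fun k => ys (φ k)) atTop (𝓝 L.1.2) := by
    exact ((continuous_snd.comp continuous_fst).tendsto L).comp hconv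
  have hu : Tendsto (fun k => us (φ k)) atTop (𝓝 L.2.1) := by
    exact ((continuous_fst.comp continuous_snd).tendsto L).comp hconv
  have hα : Tendsto (fun k => αs (φ k)) atTop (𝓝 L.2.2.1) := by
    exact ((continuous_fst.comp (continuous_snd.comp continuous_snd)).tendsto L).comp hconv
  have hlam : Tendsto (fun k => lams (φ k)) atTop (𝓝 L.2.2.2) := by
    exact ((continuous_snd.comp (continuous_snd.comp continuous_snd)).tendsto L).comp hconv
  set xb := L.1.1
  set yb := L.1.2
  set ub := L.2.1
  set αb := L.2.2.1
  set lamb := L.2.2.2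
  clear_value xb yb ub αb lamb
  have hxbX : xb ∈ X := hXc.mem_of_tendsto hx (Eventually.of_forall fun k => (hfeas (φ k)).1)
  have hybY : yb ∈ Y := hYc.mem_of_tendsto hy (Eventually.of_forall fun k => (hfeas (φ k)).2.1)
  have hαb : αb ≤ 0 := le_of_tendsto hα (Eventually.of_forall fun k => (hfeas (φ k)).2.2.1)
  have hlamb0 : 0 ≤ lamb :=
    ge_of_tendsto hlam (Eventually.of_forall fun k => (hfeas (φ k)).2.2.2.1)
  have hlambU : lamb ≤ lamBar :=
    le_of_tendsto hlam (Eventually.of_forall fun k => (hfeas (φ k)).2.2.2.2.1)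
  have hp : Tendsto (fun k => (xs (φ k), ys (φ k))) atTop (𝓝 (xb, yb)) := hx.prodMk_nhds hy
  have hpin : Tendsto (fun k => (xs (φ k), ys (φ k))) atTop (𝓝[X ×ˢ Y] (xb, yb)) :=
    tendsto_nhdsWithin_iff.mpr ⟨hp,
      Eventually.of_forall fun k => ⟨(hfeas (φ k)).1, (hfeas (φ k)).2.1⟩⟩
  have hHlim : Tendsto (fun k => Hn (xs (φ k), ys (φ k))) atTop (𝓝 (Hn (xb, yb))) :=
    (hHcont (xb, yb) ⟨hxbX, hybY⟩).tendsto.comp hpin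
  have hHD : Hn (xb, yb) + ub ∈ D :=
    hDc.mem_of_tendsto (hHlim.add hu)
      (Eventually.of_forall fun k => (hfeas (φ k)).2.2.2.2.2.1)
  -- the approximate argmin constraint passes to the limit
  have hcons : ∀ z ∈ Yn,
      gn (xb, yb) + αb ≤ gn (xb, z) + lamb * infDist (Hn (xb, z)) D + τn := by
    intro z hz
    by_contra hcon2
    push_neg at hcon2
    set R := gn (xb, z) + lamb * infDist (Hn (xb, z)) D + τn with hR
    set ε := (gn (xb, yb) + αb - R) / 3 with hε
    clear_value R ε
    have hε0 : 0 < ε := by rw [hε]; linarith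
    have hxin : Tendsto (fun k => xs (φ k)) atTop (𝓝[X] xb) :=
      tendsto_nhdsWithin_iff.mpr ⟨hx, Eventually.of_forall fun k => (hfeas (φ k)).1⟩
    have hgz : Tendsto (fun k => gn (xs (φ k), z)) atTop (𝓝 (gn (xb, z))) :=
      (hgxcont z hz xb hxbX).tendsto.comp hxin
    have hpz : Tendsto (fun k => (xs (φ k), z)) atTop (𝓝[X ×ˢ Y] (xb, z)) :=
      tendsto_nhdsWithin_iff.mpr ⟨hx.prodMk_nhds tendsto_const_nhds,
        Eventually.of_forall fun k => ⟨(hfeas (φ k)).1, hYnY hz⟩⟩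
    have hHz : Tendsto (fun k => Hn (xs (φ k), z)) atTop (𝓝 (Hn (xb, z))) :=
      (hHcont (xb, z) ⟨hxbX, hYnY hz⟩).tendsto.comp hpz
    have hdz : Tendsto (fun k => infDist (Hn (xs (φ k), z)) D) atTop
        (𝓝 (infDist (Hn (xb, z)) D)) :=
      ((continuous_infDist_pt D).tendsto _).comp hHz
    have hRk : Tendsto
        (fun k => gn (xs (φ k), z) + lams (φ k) * infDist (Hn (xs (φ k), z)) D + τn)
        atTop (𝓝 R) := by
      rw [hR]
      exact (hgz.add (hlam.mul hdz)).add tendsto_const_nhds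
    have ev1 : ∀ᶠ k in atTop, gn (xb, yb) - ε < gn (xs (φ k), ys (φ k)) :=
      hp.eventually (hglsc (xb, yb) _ (by linarith))
    have ev2 : ∀ᶠ k in atTop, αb - ε < αs (φ k) :=
      hα.eventually (eventually_gt_nhds (by linarith))
    have ev3 : ∀ᶠ k in atTop,
        gn (xs (φ k), z) + lams (φ k) * infDist (Hn (xs (φ k), z)) D + τn < R + ε :=
      hRk.eventually (eventually_lt_nhds (by linarith))
    obtain ⟨k, ⟨h1, h2⟩, h3⟩ := ((ev1.and ev2).and ev3).exists
    have h4 := (hfeas (φ k)).2.2.2.2.2.2 z hz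
    rw [hε] at hε0
    linarith
  -- value of the objective at the limit
  set eb := σn * ‖ub‖ - θn * αb with heb
  clear_value eb
  have heconv : Tendsto (fun k => e (φ k)) atTop (𝓝 eb) := by
    have h1 : Tendsto (fun k => ‖us (φ k)‖) atTop (𝓝 ‖ub‖) := hu.norm
    simpa [he_def, heb] using (tendsto_const_nhds.mul h1).sub (tendsto_const_nhds.mul hα)
  have haeconv : Tendsto (fun k => a (φ k) + e (φ k)) atTop (𝓝 r) := by
    apply tendsto_of_tendsto_of_tendsto_of_le_of_le (g := fun _ : ℕ => r)
      (h := fun k : ℕ => r + 1 / ((k : ℝ) + 1)) tendsto_const_nhds ?_ ?_ ?_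
    · simpa using (tendsto_const_nhds : Tendsto (fun _ : ℕ => r) atTop (𝓝 r)).add tendsto_one_div_add_atTop_nhds_zero_nat
    · intro k
      exact hreal_ge (φ k)
    · intro k
      have h1 := (hreal (φ k)).le
      have hkφ : (k : ℝ) ≤ (φ k : ℝ) := by exact_mod_cast hφ.le_apply
      have h2 : 1 / ((φ k : ℝ) + 1) ≤ 1 / ((k : ℝ) + 1) :=
        one_div_le_one_div_of_le (by positivity) (by linarith)
      linarith
  have haconv : Tendsto (fun k => a (φ k)) atTop (𝓝 (r - eb)) := by
    simpa using haeconv.sub heconv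
  have hfnb : fn (xb, yb) ≤ ((r - eb : ℝ) : EReal) := by
    by_contra hcc
    push_neg at hcc
    obtain ⟨b, hb1, hb2⟩ := EReal.exists_between_coe_real hcc
    have hev : ∀ᶠ k in atTop, (b : EReal) < fn (xs (φ k), ys (φ k)) :=
      hp.eventually (hflsc (xb, yb) b hb2)
    have hev' : ∀ᶠ k in atTop, b ≤ a (φ k) := by
      filter_upwards [hev] with k hk
      rw [← ha (φ k), EReal.coe_lt_coe_iff] at hk
      exact hk.le
    have hble : b ≤ r - eb := ge_of_tendsto haconv hev'
    rw [EReal.coe_lt_coe_iff] at hb1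
    linarith
  have hfeasL : PnuFeas X Y D Yn gn Hn lamBar τn xb yb ub αb lamb :=
    ⟨hxbX, hybY, hαb, hlamb0, hlambU, hHD, hcons⟩
  have hObj_le : PnuObj fn σn θn xb yb ub αb ≤ (r : EReal) := by
    rw [PnuObj]
    calc fn (xb, yb) + ((σn * ‖ub‖ - θn * αb : ℝ) : EReal)
        ≤ ((r - eb : ℝ) : EReal) + ((σn * ‖ub‖ - θn * αb : ℝ) : EReal) :=
          add_le_add hfnb le_rfl
      _ = ((r - eb + (σn * ‖ub‖ - θn * αb) : ℝ) : EReal) := (EReal.coe_add _ _).symm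
      _ = (r : EReal) := by rw [← heb]; norm_num
  have hObj_ge : (r : EReal) ≤ PnuObj fn σn θn xb yb ub αb :=
    hr.le.trans (hval_le _ _ _ _ _ hfeasL)
  have hObjeq : PnuObj fn σn θn xb yb ub αb = (r : EReal) := le_antisymm hObj_le hObj_ge
  refine ⟨xb, yb, ub, αb, lamb, hfeasL, ?_, ?_⟩
  · rw [hObjeq]
    exact EReal.coe_ne_top r
  · rw [hObjeq]
    exact hr
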